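/- Fix N ≥ 1, a sequence of points a : ℕ → (Fin N → ℝ) with each a_k in the unit cube [0,1]^N, and α > 0. Let (B_k)_{k ∈ ℕ} be i.i.d. fair Bernoulli random variables with values in {true, false} (each value with probability 1/2). For m ∈ ℕ define the set of isolated points S₀(m) = {k < m : B_k = true and for every l < m with B_l = false, the Chebyshev distance max_n |a_k(n) − a_l(n)| > α}. Then almost surely |S₀(m)| / m → 0 as m → ∞. (This is the core of Lemma 1 in the appendix: the fraction of points of the realized population I that have no α-close counterpart in the estimated population Î vanishes almost surely as the population grows, i.e., I and Î are α_I-similar with α_I → 0.) -/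

import Mathlib

open MeasureTheory

/-- Core of Lemma 1 in the appendix: each point `a k` of the unit cube is assigned
by an i.i.d. fair coin `B k` either to the realized population `I` (`B k = true`)
or to the estimated population `Î` (`B k = false`); a point `k < m` of `I` is
isolated at scale `α` if no point `l < m` of `Î` lies within Chebyshev distance `α`
of it.  Then, almost surely, the fraction of isolated points among the first `m`
points tends to `0` as `m → ∞`. -/
theorem isolated_fraction_tendsto_zero
    {Ω : Type*} [MeasurableSpace Ω] (μ : Measure Ω) [IsProbabilityMeasure μ]
    (N : ℕ) (hN : 1 ≤ N)
    (a : ℕ → (Fin N → ℝ)) (ha : ∀ k n, a k n ∈ Set.Icc (0 : ℝ) 1)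
    (α : ℝ) (hα : 0 < α)
    (B : ℕ → Ω → Bool)
    (hmeas : ∀ k, Measurable (B k))
    (hindep : ProbabilityTheory.iIndepFun B μ)
    (hlaw : ∀ k, Measure.map (B k) μ = (PMF.bernoulli (1 / 2) (by norm_num)).toMeasure) :
    ∀ᵐ ω ∂μ, Filter.Tendsto
      (fun m : ℕ =>
        (Set.ncard {k : ℕ | k < m ∧ B k ω = true ∧
            ∀ l : ℕ, l < m → B l ω = false → ∃ n : Fin N, α < |a k n - a l n|} : ℝ)
          / (m : ℝ))
      Filter.atTop (nhds 0) := by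
  classical
  -- 1. any infinite collection of coins a.s. shows some `false`
  have hzero : ∀ S : Set ℕ, S.Infinite → μ {ω | ∀ k ∈ S, B k ω = true} = 0 := by
    intro S hS
    have hhalf : ∀ k, μ ((B k) ⁻¹' {true}) = 1/2 := by
      intro k
      have h1 : Measure.map (B k) μ {true} = μ ((B k) ⁻¹' {true}) :=
        Measure.map_apply (hmeas k) (measurableSet_singleton true)
      rw [hlaw k] at h1
      rw [← h1, PMF.toMeasure_apply_singleton _ _ (measurableSet_singleton _)]
      rw [PMF.bernoulli_apply]; simp
    have key : ∀ n : ℕ, μ {ω | ∀ k ∈ S, B k ω = true} ≤ (1/2 : ENNReal)^n := by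
      intro n
      obtain ⟨t, htS, htfin, htcard⟩ := hS.exists_subset_ncard_eq n
      set F : Finset ℕ := htfin.toFinset with hF
      have hFcard : F.card = n := by
        rw [hF, ← htcard]; exact (Set.ncard_eq_toFinset_card t htfin).symm
      have hsub : {ω | ∀ k ∈ S, B k ω = true} ⊆ ⋂ k ∈ F, (B k) ⁻¹' {true} := by
        intro ω hω
        simp only [Set.mem_iInter]
        intro k hk
        exact hω k (htS (htfin.mem_toFinset.mp hk))
      calc μ {ω | ∀ k ∈ S, B k ω = true} ≤ μ (⋂ k ∈ F, (B k) ⁻¹' {true}) := measure_mono hsub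
        _ = ∏ k ∈ F, μ ((B k) ⁻¹' {true}) :=
            hindep.meas_biInter (fun i _ => ⟨{true}, measurableSet_singleton true, rfl⟩)
        _ = (1/2 : ENNReal)^n := by
            rw [Finset.prod_congr rfl (fun k _ => hhalf k), Finset.prod_const, hFcard]
    have hlim : Filter.Tendsto (fun n : ℕ => (1/2 : ENNReal)^n) Filter.atTop (nhds 0) :=
      ENNReal.tendsto_pow_atTop_nhds_zero_of_lt_one (by norm_num)
    exact le_antisymm (ge_of_tendsto' hlim key) (by positivity)
  -- 2. cells of the cube of Chebyshev diameter < α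
  set M : ℕ := ⌊1/α⌋₊ with hM
  set c : ℕ → (Fin N → ℕ) := fun k n => ⌊a k n / α⌋₊ with hc
  set Cells : Finset (Fin N → ℕ) := Fintype.piFinset (fun _ => Finset.range (M+1)) with hCells
  have hcmem : ∀ k, c k ∈ Cells := by
    intro k
    rw [hCells, Fintype.mem_piFinset]
    intro n
    rw [Finset.mem_range, Nat.lt_add_one_iff]
    refine Nat.floor_mono ?_
    gcongr
    exact (ha k n).2
  have hgeo : ∀ k l, c k = c l → ∀ n : Fin N, ¬ (α < |a k n - a l n|) := by
    intro k l h n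
    have h1 : (⌊a k n / α⌋₊ : ℝ) = (⌊a l n / α⌋₊ : ℝ) := by
      exact_mod_cast congrArg (fun f => (f n : ℕ)) h
    have hk0 : (0:ℝ) ≤ a k n := (ha k n).1
    have hl0 : (0:ℝ) ≤ a l n := (ha l n).1
    have hk1 : (⌊a k n / α⌋₊ : ℝ) ≤ a k n / α := Nat.floor_le (by positivity)
    have hl1 : (⌊a l n / α⌋₊ : ℝ) ≤ a l n / α := Nat.floor_le (by positivity)
    have hk2 : a k n / α < ⌊a k n / α⌋₊ + 1 := Nat.lt_floor_add_one _
    have hl2 : a l n / α < ⌊a l n / α⌋₊ + 1 := Nat.lt_floor_add_one _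
    intro hcon
    have hd : a k n - a l n = (a k n / α - a l n / α) * α := by field_simp
    rcases abs_cases (a k n - a l n) with ⟨he, _⟩ | ⟨he, _⟩ <;> rw [he] at hcon <;> nlinarith
  -- 3. the a.s. event
  have hae : ∀ᵐ ω ∂μ, ∀ b : Fin N → ℕ,
      ({k | c k = b}.Infinite → ∃ l, c l = b ∧ B l ω = false) := by
    rw [ae_all_iff]
    intro b
    by_cases hb : {k | c k = b}.Infinite
    · have h0 : μ {ω | ∀ k ∈ {k | c k = b}, B k ω = true} = 0 := hzero _ hb
      have hcompl : ∀ᵐ ω ∂μ, ¬ (∀ k ∈ {k | c k = b}, B k ω = true) := by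
        rw [MeasureTheory.ae_iff]
        simpa using h0
      filter_upwards [hcompl] with ω hω _
      push_neg at hω
      obtain ⟨l, hl, hlf⟩ := hω
      exact ⟨l, hl, by simpa using hlf⟩
    · filter_upwards with ω hcon
      exact absurd hcon hb
  -- 4. pointwise argument
  filter_upwards [hae] with ω hω
  set T : ℕ → Finset ℕ := fun m => (Finset.range m).filter
      (fun k => B k ω = true ∧
        ∀ l, l < m → B l ω = false → ∃ n : Fin N, α < |a k n - a l n|) with hT
  have hset : ∀ m : ℕ, {k : ℕ | k < m ∧ B k ω = true ∧
      ∀ l : ℕ, l < m → B l ω = false → ∃ n : Fin N, α < |a k n - a l n|} = ↑(T m) := by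
    intro m
    ext k
    simp only [hT, Finset.coe_filter, Finset.mem_range, Set.mem_setOf_eq]
  -- per-cell bound
  have hbound : ∀ b : Fin N → ℕ, ∃ D : ℕ, ∀ m,
      ((T m).filter (fun k => c k = b)).card ≤ D := by
    intro b
    by_cases hbC : b ∈ Cells
    · by_cases hbinf : {k | c k = b}.Infinite
      · obtain ⟨l0, hl0b, hl0f⟩ := hω b hbinf
        refine ⟨l0 + 1, fun m => ?_⟩
        rcases le_or_gt m (l0+1) with hm | hm
        · calc ((T m).filter (fun k => c k = b)).card
              ≤ (T m).card := Finset.card_filter_le _ _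
            _ ≤ (Finset.range m).card := Finset.card_filter_le _ _
            _ = m := Finset.card_range m
            _ ≤ l0 + 1 := hm
        · have hemp : (T m).filter (fun k => c k = b) = ∅ := by
            rw [Finset.filter_eq_empty_iff]
            intro k hk hkb
            rw [hT, Finset.mem_filter, Finset.mem_range] at hk
            obtain ⟨hkm, hktrue, hiso⟩ := hk
            obtain ⟨n, hn⟩ := hiso l0 (by omega) hl0f
            exact hgeo k l0 (hkb.trans hl0b.symm) n hn
          rw [hemp]
          simp
      · have hfin := Set.not_infinite.mp hbinf
        refine ⟨hfin.toFinset.card, fun m => ?_⟩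
        apply Finset.card_le_card
        intro k hk
        rw [Set.Finite.mem_toFinset]
        exact (Finset.mem_filter.mp hk).2
    · refine ⟨0, fun m => ?_⟩
      have hemp : (T m).filter (fun k => c k = b) = ∅ := by
        rw [Finset.filter_eq_empty_iff]
        intro k _ hkb
        exact hbC (hkb ▸ hcmem k)
      rw [hemp]; simp
  choose D hD using hbound
  set C : ℕ := ∑ b ∈ Cells, D b with hCdef
  have hcard : ∀ m, (T m).card ≤ C := by
    intro m
    rw [Finset.card_eq_sum_card_fiberwise (f := c) (t := Cells) (fun k _ => hcmem k)]
    exact Finset.sum_le_sum (fun b _ => hD b m)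
  have hfun : (fun m : ℕ =>
      (Set.ncard {k : ℕ | k < m ∧ B k ω = true ∧
          ∀ l : ℕ, l < m → B l ω = false → ∃ n : Fin N, α < |a k n - a l n|} : ℝ) / (m : ℝ))
      = fun m : ℕ => ((T m).card : ℝ) / m := by
    funext m
    rw [hset m, Set.ncard_coe_finset]
  rw [hfun]
  refine squeeze_zero (fun m => by positivity) (fun m => ?_)
    (tendsto_const_div_atTop_nhds_zero_nat (C : ℝ))
  rcases Nat.eq_zero_or_pos m with rfl | hm
  · simp
  · gcongr
    exact_mod_cast hcard m
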